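/- (Lemma 4.1, part (3), at the true parameter.) In the two-stage model with η(·, θ₀) and η'(·, θ₀) bounded Borel functions on [a,b], define the stage-wise incremental observed information J^D_n(θ₀) = n₁² σ^{-4}(ȳ₁ − η(x₁, θ₀))² η'(x₁, θ₀)² + n₂² σ^{-4}(ȳ₂ − η(x₂, θ₀))² η'(x₂, θ₀)², where n = n₁ + n₂. Then, as n₂ → ∞ with n₁ held fixed, n^{-1} J^D_n(θ₀) converges in distribution to U^{-2}·W, where U^{-2} = η'(x₂, θ₀)²/σ² and W = Z² with Z a standard normal random variable independent of σ(ȳ₁) (so W has a chi-squared distribution with 1 degree of freedom, independent of U^{-2}). -/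

import Mathlib

open MeasureTheory ProbabilityTheory Filter

open scoped NNReal ENNReal

/-- Convergence in distribution (weak convergence of laws), tested against bounded
continuous functions. -/
def ConvInDistrib {Ω : Type*} [MeasurableSpace Ω] (μ : Measure Ω)
    (X : ℕ → Ω → ℝ) (Xlim : Ω → ℝ) : Prop :=
  ∀ f : BoundedContinuousFunction ℝ ℝ,
    Tendsto (fun n => ∫ ω, f (X n ω) ∂μ) atTop (nhds (∫ ω, f (Xlim ω) ∂μ))

section Aux

open Real

private lemma gauss_exponent (a b z x : ℝ) (ha : 0 < a) (hb : 0 < b) :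
    -(x - 0)^2/(2*a) + -((z - x) - 0)^2/(2*b)
      = -(z^2) / (2*(a+b)) + -(((a+b)/(2*a*b)) * (x - a*z/(a+b))^2) := by
  have h1 : a ≠ 0 := ha.ne'
  have h2 : b ≠ 0 := hb.ne'
  have h3 : a + b ≠ 0 := by positivity
  field_simp
  ring

private lemma gauss_prod_eq (v₁ v₂ : ℝ≥0) (h₁ : v₁ ≠ 0) (h₂ : v₂ ≠ 0) (z x : ℝ) :
    gaussianPDFReal 0 v₁ x * gaussianPDFReal 0 v₂ (z - x)
      = ((√(2*π*v₁))⁻¹ * (√(2*π*v₂))⁻¹ * rexp (-(z^2) / (2*((v₁:ℝ)+v₂))))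
        * rexp (-((((v₁:ℝ)+v₂)/(2*v₁*v₂))) * (x - v₁*z/((v₁:ℝ)+v₂))^2) := by
  have ha : 0 < (v₁:ℝ) := lt_of_le_of_ne v₁.coe_nonneg (by exact_mod_cast (Ne.symm h₁))
  have hb : 0 < (v₂:ℝ) := lt_of_le_of_ne v₂.coe_nonneg (by exact_mod_cast (Ne.symm h₂))
  rw [gaussianPDFReal, gaussianPDFReal, mul_mul_mul_comm, ← Real.exp_add,
    gauss_exponent _ _ z x ha hb, Real.exp_add]
  ring

private lemma gauss_const_eq (v₁ v₂ : ℝ≥0) (h₁ : v₁ ≠ 0) (h₂ : v₂ ≠ 0) :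
    (√(2*π*v₁))⁻¹ * (√(2*π*v₂))⁻¹ * √(π / (((v₁:ℝ)+v₂)/(2*v₁*v₂)))
      = (√(2*π*((v₁:ℝ)+v₂)))⁻¹ := by
  have ha : 0 < (v₁:ℝ) := lt_of_le_of_ne v₁.coe_nonneg (by exact_mod_cast (Ne.symm h₁))
  have hb : 0 < (v₂:ℝ) := lt_of_le_of_ne v₂.coe_nonneg (by exact_mod_cast (Ne.symm h₂))
  have hπ := Real.pi_pos
  rw [← Real.sqrt_inv, ← Real.sqrt_inv, ← Real.sqrt_mul (by positivity),
    ← Real.sqrt_mul (by positivity), ← Real.sqrt_inv]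
  congr 1
  have h3 : (v₁:ℝ) + v₂ ≠ 0 := by positivity
  field_simp

private lemma gauss_pdf_conv (v₁ v₂ : ℝ≥0) (h₁ : v₁ ≠ 0) (h₂ : v₂ ≠ 0) (z : ℝ) :
    ∫ x, gaussianPDFReal 0 v₁ x * gaussianPDFReal 0 v₂ (z - x)
      = gaussianPDFReal 0 (v₁ + v₂) z := by
  have ha : 0 < (v₁:ℝ) := lt_of_le_of_ne v₁.coe_nonneg (by exact_mod_cast (Ne.symm h₁))
  have hb : 0 < (v₂:ℝ) := lt_of_le_of_ne v₂.coe_nonneg (by exact_mod_cast (Ne.symm h₂))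
  have hc : 0 < ((v₁:ℝ)+v₂)/(2*v₁*v₂) := by positivity
  simp_rw [gauss_prod_eq v₁ v₂ h₁ h₂ z]
  rw [integral_const_mul]
  have this1 : ∫ x : ℝ, rexp (-((((v₁:ℝ)+v₂)/(2*v₁*v₂))) * (x - v₁*z/((v₁:ℝ)+v₂))^2)
      = √(π / (((v₁:ℝ)+v₂)/(2*v₁*v₂))) :=
    (integral_sub_right_eq_self (fun t : ℝ => rexp (-((((v₁:ℝ)+v₂)/(2*v₁*v₂))) * t^2))
      (v₁*z/((v₁:ℝ)+v₂))).trans (integral_gaussian _)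
  rw [this1, gaussianPDFReal]
  push_cast
  rw [sub_zero, ← gauss_const_eq v₁ v₂ h₁ h₂]
  ring

private lemma gauss_conv_integrable (v₁ v₂ : ℝ≥0) (h₁ : v₁ ≠ 0) (h₂ : v₂ ≠ 0) (z : ℝ) :
    Integrable (fun x => gaussianPDFReal 0 v₁ x * gaussianPDFReal 0 v₂ (z - x)) := by
  have ha : 0 < (v₁:ℝ) := lt_of_le_of_ne v₁.coe_nonneg (by exact_mod_cast (Ne.symm h₁))
  have hb : 0 < (v₂:ℝ) := lt_of_le_of_ne v₂.coe_nonneg (by exact_mod_cast (Ne.symm h₂))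
  have hc : 0 < ((v₁:ℝ)+v₂)/(2*v₁*v₂) := by positivity
  simp_rw [gauss_prod_eq v₁ v₂ h₁ h₂ z]
  exact ((integrable_exp_neg_mul_sq hc).comp_sub_right (v₁*z/((v₁:ℝ)+v₂))).const_mul _

private lemma gauss_pdf_conv_lintegral (v₁ v₂ : ℝ≥0) (h₁ : v₁ ≠ 0) (h₂ : v₂ ≠ 0) (z : ℝ) :
    ∫⁻ x, gaussianPDF 0 v₁ x * gaussianPDF 0 v₂ (z - x) = gaussianPDF 0 (v₁ + v₂) z := by
  simp_rw [gaussianPDF, ← ENNReal.ofReal_mul (gaussianPDFReal_nonneg 0 v₁ _)]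
  rw [← ofReal_integral_eq_lintegral_ofReal (gauss_conv_integrable v₁ v₂ h₁ h₂ z)
      (Filter.Eventually.of_forall fun x =>
        mul_nonneg (gaussianPDFReal_nonneg 0 v₁ x) (gaussianPDFReal_nonneg 0 v₂ _)),
    gauss_pdf_conv v₁ v₂ h₁ h₂ z]

private lemma gaussian_map_add (v₁ v₂ : ℝ≥0) (h₁ : v₁ ≠ 0) (h₂ : v₂ ≠ 0) :
    ((gaussianReal 0 v₁).prod (gaussianReal 0 v₂)).map (fun p : ℝ × ℝ => p.1 + p.2)
      = gaussianReal 0 (v₁ + v₂) := by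
  have hadd : Measurable fun p : ℝ × ℝ => p.1 + p.2 := measurable_fst.add measurable_snd
  have h12 : v₁ + v₂ ≠ 0 := by simp [h₁]
  have hpdf1 := measurable_gaussianPDF 0 v₁
  have hpdf2 := measurable_gaussianPDF 0 v₂
  ext s hs
  rw [Measure.map_apply hadd hs, gaussianReal_of_var_ne_zero 0 h12, withDensity_apply _ hs,
    Measure.prod_apply (hadd hs)]
  have hinner : ∀ x : ℝ, (gaussianReal 0 v₂) (Prod.mk x ⁻¹' ((fun p : ℝ×ℝ => p.1+p.2) ⁻¹' s))
      = ∫⁻ z, s.indicator (fun _ => (1:ℝ≥0∞)) z * gaussianPDF 0 v₂ (z - x) := by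
    intro x
    have hpre : (Prod.mk x ⁻¹' ((fun p : ℝ×ℝ => p.1+p.2) ⁻¹' s)) = (fun y => x + y) ⁻¹' s := rfl
    have hms : MeasurableSet ((fun y => x + y) ⁻¹' s) := measurable_const_add x hs
    rw [hpre, gaussianReal_of_var_ne_zero 0 h₂, withDensity_apply _ hms,
      ← lintegral_indicator hms]
    have hptwise : ∀ a : ℝ, ((fun y => x + y) ⁻¹' s).indicator (gaussianPDF 0 v₂) a
        = (fun z => s.indicator (fun _ => (1:ℝ≥0∞)) z * gaussianPDF 0 v₂ (z - x)) (x + a) := by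
      intro a
      simp only [Set.indicator_apply, Set.mem_preimage, add_sub_cancel_left]
      by_cases hmem : x + a ∈ s
      · simp [hmem]
      · simp [hmem]
    simp_rw [hptwise]
    exact lintegral_add_left_eq_self (μ := volume)
      (fun z => s.indicator (fun _ => (1:ℝ≥0∞)) z * gaussianPDF 0 v₂ (z - x)) x
  simp_rw [hinner]
  -- notation
  set I : ℝ → ℝ≥0∞ := s.indicator (fun _ => (1:ℝ≥0∞)) with hI
  have hImeas : Measurable I := measurable_const.indicator hs
  have hmzF : ∀ x : ℝ, Measurable fun z => I z * gaussianPDF 0 v₂ (z - x) := fun x =>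
    hImeas.mul (hpdf2.comp (measurable_id.sub measurable_const))
  have hmxF : ∀ z : ℝ, Measurable fun x => gaussianPDF 0 v₁ x * gaussianPDF 0 v₂ (z - x) :=
    fun z => hpdf1.mul (hpdf2.comp (measurable_const.sub measurable_id))
  have hmF : Measurable (Function.uncurry fun x z : ℝ =>
      gaussianPDF 0 v₁ x * (I z * gaussianPDF 0 v₂ (z - x))) := by
    apply Measurable.mul
    · exact hpdf1.comp measurable_fst
    · exact (hImeas.comp measurable_snd).mul
        (hpdf2.comp (measurable_snd.sub measurable_fst))
  have hH : Measurable fun x : ℝ => ∫⁻ z, I z * gaussianPDF 0 v₂ (z - x) := by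
    have : Measurable (Function.uncurry fun x z : ℝ => I z * gaussianPDF 0 v₂ (z - x)) :=
      (hImeas.comp measurable_snd).mul (hpdf2.comp (measurable_snd.sub measurable_fst))
    exact this.lintegral_prod_right
  rw [gaussianReal_of_var_ne_zero 0 h₁, lintegral_withDensity_eq_lintegral_mul _ hpdf1 hH]
  simp only [Pi.mul_apply]
  calc ∫⁻ x, gaussianPDF 0 v₁ x * ∫⁻ z, I z * gaussianPDF 0 v₂ (z - x)
      = ∫⁻ x, ∫⁻ z, gaussianPDF 0 v₁ x * (I z * gaussianPDF 0 v₂ (z - x)) := by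
        congr 1; funext x; exact (lintegral_const_mul _ (hmzF x)).symm
    _ = ∫⁻ z, ∫⁻ x, gaussianPDF 0 v₁ x * (I z * gaussianPDF 0 v₂ (z - x)) :=
        lintegral_lintegral_swap hmF.aemeasurable
    _ = ∫⁻ z, I z * ∫⁻ x, gaussianPDF 0 v₁ x * gaussianPDF 0 v₂ (z - x) := by
        congr 1; funext z
        rw [← lintegral_const_mul _ (hmxF z)]
        congr 1; funext x; ring
    _ = ∫⁻ z, I z * gaussianPDF 0 (v₁ + v₂) z := by
        congr 1; funext z; rw [gauss_pdf_conv_lintegral v₁ v₂ h₁ h₂ z]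
    _ = ∫⁻ z in s, gaussianPDF 0 (v₁ + v₂) z := by
        rw [← lintegral_indicator hs]
        congr 1; funext z
        simp only [hI, Set.indicator_apply]
        by_cases hmem : z ∈ s <;> simp [hmem]

private lemma map_add_of_indep {Ω : Type*} [MeasurableSpace Ω] (μ : Measure Ω)
    [IsProbabilityMeasure μ] (X Y : Ω → ℝ) (hX : Measurable X) (hY : Measurable Y)
    (h : IndepFun X Y μ) (v₁ v₂ : ℝ≥0) (h₁ : v₁ ≠ 0) (h₂ : v₂ ≠ 0)
    (hXl : μ.map X = gaussianReal 0 v₁) (hYl : μ.map Y = gaussianReal 0 v₂) :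
    μ.map (fun ω => X ω + Y ω) = gaussianReal 0 (v₁ + v₂) := by
  have hp := (indepFun_iff_map_prod_eq_prod_map_map hX.aemeasurable hY.aemeasurable).mp h
  have hcomp : (fun ω => X ω + Y ω)
      = (fun p : ℝ×ℝ => p.1 + p.2) ∘ (fun ω => (X ω, Y ω)) := rfl
  rw [hcomp, ← Measure.map_map (g := fun p : ℝ×ℝ => p.1 + p.2) (measurable_fst.add measurable_snd) (hX.prodMk hY), hp, hXl, hYl,
    gaussian_map_add v₁ v₂ h₁ h₂]

private lemma sum_law {Ω : Type*} [MeasurableSpace Ω] (μ : Measure Ω) [IsProbabilityMeasure μ]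
    (n₁ : ℕ) (v : ℝ≥0) (hv : v ≠ 0) (ε : (Fin n₁ ⊕ ℕ) → Ω → ℝ) (hεmeas : ∀ k, Measurable (ε k))
    (hεindep : iIndepFun ε μ)
    (hεlaw : ∀ k, μ.map (ε k) = gaussianReal 0 v) (n : ℕ) :
    μ.map (fun ω => ∑ j ∈ Finset.range (n+1), ε (Sum.inr j) ω)
      = gaussianReal 0 (((n+1 : ℕ) : ℝ≥0) * v) := by
  induction n with
  | zero =>
      have h0 : (fun ω => ∑ j ∈ Finset.range (0+1), ε (Sum.inr j) ω) = ε (Sum.inr 0) := by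
        funext ω; simp
      rw [h0, hεlaw]
      norm_num
  | succ n ih =>
      have hS : (fun ω => ∑ j ∈ Finset.range (n+2), ε (Sum.inr j) ω)
          = fun ω => (∑ j ∈ Finset.range (n+1), ε (Sum.inr j) ω) + ε (Sum.inr (n+1)) ω := by
        funext ω; rw [Finset.sum_range_succ]
      rw [hS]
      have hSmeas : Measurable fun ω => ∑ j ∈ Finset.range (n+1), ε (Sum.inr j) ω :=
        Finset.measurable_sum _ fun j _ => hεmeas _
      have hindep : IndepFun (fun ω => ∑ j ∈ Finset.range (n+1), ε (Sum.inr j) ω)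
          (ε (Sum.inr (n+1))) μ := by
        have hnotmem : (Sum.inr (n+1) : Fin n₁ ⊕ ℕ) ∉ (Finset.range (n+1)).image Sum.inr := by
          simp
        have := hεindep.indepFun_finsetSum_of_notMem hεmeas hnotmem
        have heq : (∑ j ∈ (Finset.range (n+1)).image Sum.inr, ε j)
            = fun ω => ∑ j ∈ Finset.range (n+1), ε (Sum.inr j) ω := by
          funext ω
          rw [Finset.sum_apply]
          exact Finset.sum_image (fun a _ b _ h => Sum.inr_injective h)
        rwa [heq] at this
      have hres := map_add_of_indep μ _ _ hSmeas (hεmeas _) hindep _ v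
        (mul_ne_zero (Nat.cast_ne_zero.mpr (Nat.succ_ne_zero n)) hv) hv ih (hεlaw _)
      rw [hres]
      congr 1
      push_cast
      ring

end Aux

/-- Lemma 4.1 (3), at the true parameter: as `n₂ → ∞` with `n₁` fixed, the averaged
stage-wise incremental observed information `n⁻¹ J^D_n(θ₀)` converges in distribution to
`U⁻²·W`, where `U⁻² = η'(x₂, θ₀)²/σ²` and `W = Z²` with `Z` standard normal independent of
`σ(ȳ₁)` (so `W ∼ χ²(1)`, independent of `U⁻²`). -/
theorem stagewise_incremental_observed_information_convergence
    {Ω : Type*} [mΩ : MeasurableSpace Ω] (μ : Measure Ω) [IsProbabilityMeasure μ]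
    (n₁ : ℕ) (hn₁ : 1 ≤ n₁) (a b x₁ θ₀ σ : ℝ) (hab : a ≤ b) (hσ : 0 < σ)
    (η η' : ℝ → ℝ → ℝ)
    (hderiv : ∀ x θ, HasDerivAt (fun t => η x t) (η' x θ) θ)
    (hη : Measurable fun x => η x θ₀) (hηbdd : ∃ C : ℝ, ∀ x ∈ Set.Icc a b, |η x θ₀| ≤ C)
    (hη' : Measurable fun x => η' x θ₀) (hη'bdd : ∃ C : ℝ, ∀ x ∈ Set.Icc a b, |η' x θ₀| ≤ C)
    (ε : (Fin n₁ ⊕ ℕ) → Ω → ℝ) (hεmeas : ∀ k, Measurable (ε k))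
    (hεindep : iIndepFun ε μ)
    (hεlaw : ∀ k, μ.map (ε k) = gaussianReal 0 ⟨σ ^ 2, sq_nonneg σ⟩)
    (ξ : ℝ → ℝ) (hξ : Measurable ξ) (hξab : ∀ y, ξ y ∈ Set.Icc a b)
    (ybar₁ : Ω → ℝ)
    (hybar₁ : ybar₁ = fun ω => (n₁ : ℝ)⁻¹ * ∑ i : Fin n₁, (η x₁ θ₀ + ε (Sum.inl i) ω))
    (ybar₂ : ℕ → Ω → ℝ)
    (hybar₂ : ybar₂ = fun (n₂ : ℕ) (ω : Ω) =>
      (n₂ : ℝ)⁻¹ * ∑ j ∈ Finset.range n₂, (η (ξ (ybar₁ ω)) θ₀ + ε (Sum.inr j) ω))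
    -- the stage-wise incremental observed information, for second-stage sample size `n₂`
    (J : ℕ → Ω → ℝ)
    (hJ : J = fun (n₂ : ℕ) (ω : Ω) =>
      (n₁ : ℝ) ^ 2 * (σ ^ 4)⁻¹ * (ybar₁ ω - η x₁ θ₀) ^ 2 * (η' x₁ θ₀) ^ 2
        + (n₂ : ℝ) ^ 2 * (σ ^ 4)⁻¹ * (ybar₂ n₂ ω - η (ξ (ybar₁ ω)) θ₀) ^ 2 *
            (η' (ξ (ybar₁ ω)) θ₀) ^ 2)
    -- a standard normal random variable independent of `σ(ȳ₁)`
    (Z : Ω → ℝ) (hZmeas : Measurable Z)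
    (hZindep : Indep (MeasurableSpace.comap Z inferInstance)
      (MeasurableSpace.comap ybar₁ inferInstance) μ)
    (hZlaw : μ.map Z = gaussianReal 0 1) :
    ConvInDistrib μ (fun (n₂ : ℕ) (ω : Ω) => ((n₁ + n₂ : ℕ) : ℝ)⁻¹ * J n₂ ω)
      (fun ω => ((η' (ξ (ybar₁ ω)) θ₀) ^ 2 / σ ^ 2) * (Z ω) ^ 2) := by
  classical
  intro f
  have hσ0 : σ ≠ 0 := hσ.ne'
  set v : ℝ≥0 := ⟨σ^2, sq_nonneg σ⟩ with hv
  have hvcoe : (v:ℝ) = σ^2 := rfl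
  have hvne : v ≠ 0 := by
    intro hzero
    exact pow_ne_zero 2 hσ0 (by rw [← hvcoe, hzero, NNReal.coe_zero])
  have hymeas : Measurable ybar₁ := by
    rw [hybar₁]
    exact (Finset.measurable_sum _ fun i _ => measurable_const.add (hεmeas _)).const_mul _
  set S : ℕ → Ω → ℝ := fun n ω => ∑ j ∈ Finset.range n, ε (Sum.inr j) ω with hSdef
  have hSmeas : ∀ n, Measurable (S n) := fun n => Finset.measurable_sum _ fun j _ => hεmeas _
  set Zn : ℕ → Ω → ℝ := fun n ω => (Real.sqrt n * σ)⁻¹ * S n ω with hZndef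
  have hZnmeas : ∀ n, Measurable (Zn n) := fun n => (hSmeas n).const_mul _
  -- law of `Zn n` for `n ≠ 0`
  have hZnlaw : ∀ n : ℕ, n ≠ 0 → μ.map (Zn n) = gaussianReal 0 1 := by
    intro n hn
    obtain ⟨m, rfl⟩ := Nat.exists_eq_succ_of_ne_zero hn
    have hslaw := sum_law μ n₁ v hvne ε hεmeas hεindep (fun k => hεlaw k) m
    have hNpos : (0:ℝ) < ((m+1:ℕ):ℝ) := by positivity
    have hcomp : Zn (m+1) = (fun x => (Real.sqrt ((m+1:ℕ):ℝ) * σ)⁻¹ * x) ∘ S (m+1) := rfl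
    rw [hcomp, ← Measure.map_map (measurable_const_mul _) (hSmeas _), show μ.map (S (m+1)) = _
      from hslaw, gaussianReal_map_const_mul, mul_zero]
    congr 1
    apply NNReal.coe_injective
    rw [NNReal.coe_mul, NNReal.coe_mul, NNReal.coe_mk, NNReal.coe_natCast, hvcoe,
      NNReal.coe_one, inv_pow, mul_pow, Real.sq_sqrt hNpos.le]
    exact inv_mul_cancel₀ (by positivity)
  -- independence of `ybar₁` and `Zn n`
  have hindepYZ : ∀ n : ℕ, IndepFun ybar₁ (Zn n) μ := by
    intro n
    set Sfin : Finset (Fin n₁ ⊕ ℕ) := Finset.univ.image Sum.inl with hSfin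
    set Tfin : Finset (Fin n₁ ⊕ ℕ) := (Finset.range n).image Sum.inr with hTfin
    have hdisj : Disjoint Sfin Tfin := by
      rw [Finset.disjoint_left]
      rintro x hx hx'
      rw [hSfin, Finset.mem_image] at hx
      rw [hTfin, Finset.mem_image] at hx'
      obtain ⟨i, _, rfl⟩ := hx
      obtain ⟨j, _, h⟩ := hx'
      exact Sum.inr_ne_inl h
    have hbase := hεindep.indepFun_finset Sfin Tfin hdisj hεmeas
    set φ : (↥Sfin → ℝ) → ℝ :=
      fun u => (n₁:ℝ)⁻¹ * ∑ i, (η x₁ θ₀ + u i) with hφ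
    set ψ : (↥Tfin → ℝ) → ℝ :=
      fun u => (Real.sqrt n * σ)⁻¹ * ∑ i, u i with hψ
    have hφm : Measurable φ :=
      (Finset.measurable_sum _ fun i _ => measurable_const.add (measurable_pi_apply i)).const_mul _
    have hψm : Measurable ψ :=
      (Finset.measurable_sum _ fun i _ => measurable_pi_apply i).const_mul _
    have hcomp := hbase.comp hφm hψm
    have h1 : φ ∘ (fun ω (i : Sfin) => ε i ω) = ybar₁ := by
      funext ω
      rw [hybar₁]
      simp only [Function.comp_apply, hφ]
      congr 1
      rw [Finset.sum_coe_sort Sfin (fun k => η x₁ θ₀ + ε k ω), hSfin]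
      exact Finset.sum_image (fun x _ y _ h => Sum.inl_injective h)
    have h2 : ψ ∘ (fun ω (i : Tfin) => ε i ω) = Zn n := by
      funext ω
      simp only [Function.comp_apply, hψ, hZndef]
      congr 1
      rw [Finset.sum_coe_sort Tfin (fun k => ε k ω), hTfin, hSdef]
      exact Finset.sum_image (fun x _ y _ h => Sum.inr_injective h)
    rwa [h1, h2] at hcomp
  -- joint laws
  haveI : IsProbabilityMeasure (μ.map ybar₁) := Measure.isProbabilityMeasure_map hymeas.aemeasurable
  set P : Measure (ℝ × ℝ) := (μ.map ybar₁).prod (gaussianReal 0 1) with hP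
  haveI : IsProbabilityMeasure P := by rw [hP]; infer_instance
  have hpair_n : ∀ n : ℕ, n ≠ 0 → μ.map (fun ω => (ybar₁ ω, Zn n ω)) = P := by
    intro n hn
    rw [hP, ← hZnlaw n hn]
    exact (indepFun_iff_map_prod_eq_prod_map_map hymeas.aemeasurable
      (hZnmeas n).aemeasurable).mp (hindepYZ n)
  have hZY : IndepFun ybar₁ Z μ := (show IndepFun Z ybar₁ μ from hZindep).symm
  have hpair_Z : μ.map (fun ω => (ybar₁ ω, Z ω)) = P := by
    rw [hP, ← hZlaw]
    exact (indepFun_iff_map_prod_eq_prod_map_map hymeas.aemeasurable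
      hZmeas.aemeasurable).mp hZY
  -- the transformed functions
  set A : ℝ → ℝ := fun y => (n₁:ℝ)^2 * (σ^4)⁻¹ * (y - η x₁ θ₀)^2 * (η' x₁ θ₀)^2 with hA
  set h : ℝ → ℝ := fun y => (η' (ξ y) θ₀)^2 with hh
  have hhm : Measurable h := (hη'.comp hξ).pow_const 2
  have hAm : Measurable A := by
    apply Measurable.mul_const
    exact (((measurable_id.sub_const _).pow_const 2).const_mul _)
  set g : ℕ → ℝ × ℝ → ℝ := fun n p =>
    (((n₁+n : ℕ)):ℝ)⁻¹ * A p.1 + ((n:ℝ)/(((n₁+n : ℕ)):ℝ)) * ((h p.1 / σ^2) * p.2^2) with hg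
  set glim : ℝ × ℝ → ℝ := fun p => (h p.1 / σ^2) * p.2^2 with hglim
  have hgm : ∀ n, Measurable (g n) := by
    intro n
    apply Measurable.add
    · exact ((hAm.comp measurable_fst).const_mul _)
    · exact ((((hhm.comp measurable_fst).div_const _).mul
        (measurable_snd.pow_const 2)).const_mul _)
  have hglimm : Measurable glim :=
    ((hhm.comp measurable_fst).div_const _).mul (measurable_snd.pow_const 2)
  -- pointwise identification
  have hXeq : ∀ n : ℕ, n ≠ 0 → ∀ ω : Ω,
      ((n₁ + n : ℕ) : ℝ)⁻¹ * J n ω = g n (ybar₁ ω, Zn n ω) := by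
    intro n hn ω
    have hn0 : ((n:ℝ)) ≠ 0 := Nat.cast_ne_zero.mpr hn
    have hNpos : (0:ℝ) < ((n₁+n:ℕ):ℝ) := by positivity
    have hsq : Real.sqrt (n:ℝ) ^ 2 = (n:ℝ) := Real.sq_sqrt (Nat.cast_nonneg n)
    have hsqrt0 : Real.sqrt (n:ℝ) ≠ 0 := by
      rw [Real.sqrt_ne_zero' ]
      exact_mod_cast Nat.pos_of_ne_zero hn
    have hybar2 : ybar₂ n ω - η (ξ (ybar₁ ω)) θ₀ = (n:ℝ)⁻¹ * S n ω := by
      rw [hybar₂]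
      simp only
      rw [Finset.sum_add_distrib, Finset.sum_const, Finset.card_range, nsmul_eq_mul, mul_add,
        inv_mul_cancel_left₀ hn0]
      rw [hSdef]
      ring
    rw [hJ]
    simp only
    rw [hybar2, hg]
    simp only
    rw [hZndef]
    simp only
    rw [show ((Real.sqrt (n:ℝ) * σ)⁻¹ * S n ω)^2 = (((n:ℝ) * σ^2))⁻¹ * (S n ω)^2 from by
      rw [mul_pow, inv_pow, mul_pow, hsq]]
    rw [hA, hh]
    field_simp
  -- convergence of g n to glim pointwise
  have hgconv : ∀ p : ℝ × ℝ, Tendsto (fun n => g n p) atTop (nhds (glim p)) := by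
    intro p
    have h1 : Tendsto (fun n : ℕ => (((n₁+n : ℕ)):ℝ)⁻¹) atTop (nhds 0) := by
      have : Tendsto (fun n : ℕ => ((n₁:ℝ) + n)) atTop atTop :=
        tendsto_atTop_add_const_left atTop (n₁:ℝ) tendsto_natCast_atTop_atTop
      have := tendsto_inv_atTop_zero.comp this
      refine this.congr fun n => ?_
      simp only [Function.comp_apply]
      push_cast
      try ring
    have h2 : Tendsto (fun n : ℕ => ((n:ℝ)/(((n₁+n : ℕ)):ℝ))) atTop (nhds 1) := by
      have := tendsto_natCast_div_add_atTop (𝕜 := ℝ) (n₁:ℝ)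
      refine this.congr fun n => ?_
      push_cast
      rw [add_comm]
    have := (h1.mul_const (A p.1)).add (h2.mul_const ((h p.1 / σ^2) * p.2^2))
    rw [hg, hglim]
    push_cast
    simpa using this
  -- dominated convergence over P
  have hfmeas : ∀ n, AEStronglyMeasurable (fun p => f (g n p)) P :=
    fun n => (f.continuous.measurable.comp (hgm n)).aestronglyMeasurable
  have hmain : Tendsto (fun n => ∫ p, f (g n p) ∂P) atTop (nhds (∫ p, f (glim p) ∂P)) := by
    apply tendsto_integral_of_dominated_convergence (fun _ => ‖f‖) hfmeas (integrable_const _)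
    · intro n
      exact Filter.Eventually.of_forall fun p => f.norm_coe_le_norm _
    · exact Filter.Eventually.of_forall fun p => (f.continuous.tendsto _).comp (hgconv p)
  -- transfer of integrals
  have htarget : ∫ ω, f (((η' (ξ (ybar₁ ω)) θ₀) ^ 2 / σ ^ 2) * (Z ω) ^ 2) ∂μ
      = ∫ p, f (glim p) ∂P := by
    rw [← hpair_Z, integral_map (hymeas.prodMk hZmeas).aemeasurable
      (Measurable.aestronglyMeasurable (show Measurable fun p : ℝ × ℝ => f (glim p) from
        f.continuous.measurable.comp hglimm))]
  have hee : ∀ᶠ n in atTop, ∫ p, f (g n p) ∂P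
      = ∫ ω, f (((n₁ + n : ℕ) : ℝ)⁻¹ * J n ω) ∂μ := by
    filter_upwards [eventually_ge_atTop 1] with n hn
    have hn0 : n ≠ 0 := Nat.one_le_iff_ne_zero.mp hn
    rw [← hpair_n n hn0, integral_map (hymeas.prodMk (hZnmeas n)).aemeasurable
      (Measurable.aestronglyMeasurable (show Measurable fun p : ℝ × ℝ => f (g n p) from
        f.continuous.measurable.comp (hgm n)))]
    exact integral_congr_ae (Filter.Eventually.of_forall fun ω => congrArg f (hXeq n hn0 ω).symm)
  rw [htarget]
  exact hmain.congr' hee
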